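/- Let (R,Σ) be a difference ring and f ∈ R. The set D^{(Σ)}(f) = {𝔭 ∈ Spec^{(Σ)}(R) : f ∉ 𝔭} is quasi-compact in the topology induced from the Zariski topology: any cover of D^{(Σ)}(f) by sets D^{(Σ)}(g_i) admits a finite subcover. -/

import Mathlib

namespace DfQC

variable {R : Type*} [CommRing R]

/-- Perfect (difference) closure of a set `A`, as an inductive predicate. -/
inductive Pc (Sg : Set (R →+* R)) (A : Set R) : R → Prop
  | base {a : R} : a ∈ A → Pc Sg A a
  | zero : Pc Sg A 0
  | add {a b : R} : Pc Sg A a → Pc Sg A b → Pc Sg A (a + b)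
  | smul (r : R) {a : R} : Pc Sg A a → Pc Sg A (r * a)
  | sigma {σ : R →+* R} (hσ : σ ∈ Sg) {a : R} : Pc Sg A a → Pc Sg A (σ a)
  | unsigma {σ : R →+* R} (hσ : σ ∈ Sg) {a : R} : Pc Sg A (σ a) → Pc Sg A a
  | sqrt {a : R} : Pc Sg A (a * a) → Pc Sg A a
  | mix {σ : R →+* R} (hσ : σ ∈ Sg) (a b : R) : Pc Sg A (a * b) → Pc Sg A (a * σ b)

variable (Sg : Set (R →+* R))

/-- A set closed under all the rules of `Pc`. -/
def IsPerf (S : Set R) : Prop :=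
  (0 : R) ∈ S ∧ (∀ a b : R, a ∈ S → b ∈ S → a + b ∈ S) ∧
  (∀ r a : R, a ∈ S → r * a ∈ S) ∧
  (∀ σ ∈ Sg, ∀ a : R, a ∈ S → σ a ∈ S) ∧
  (∀ σ ∈ Sg, ∀ a : R, σ a ∈ S → a ∈ S) ∧
  (∀ a : R, a * a ∈ S → a ∈ S) ∧
  (∀ σ ∈ Sg, ∀ a b : R, a * b ∈ S → a * σ b ∈ S)

theorem Pc_min {S : Set R} (hS : IsPerf Sg S) {A : Set R} (hA : A ⊆ S) :
    ∀ {x : R}, Pc Sg A x → x ∈ S := by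
  obtain ⟨h0, hadd, hsmul, hs, hus, hsq, hmix⟩ := hS
  intro x hx
  induction hx with
  | base h => exact hA h
  | zero => exact h0
  | add _ _ iha ihb => exact hadd _ _ iha ihb
  | smul r _ ih => exact hsmul _ _ ih
  | sigma hσ _ ih => exact hs _ hσ _ ih
  | unsigma hσ _ ih => exact hus _ hσ _ ih
  | sqrt _ ih => exact hsq _ ih
  | mix hσ a b _ ih => exact hmix _ hσ _ _ ih

theorem Pc_isPerf (A : Set R) : IsPerf Sg {x | Pc Sg A x} :=
  ⟨Pc.zero, fun _ _ => Pc.add, fun _ _ => Pc.smul _, fun _ hσ _ => Pc.sigma hσ,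
   fun _ hσ _ => Pc.unsigma hσ, fun _ => Pc.sqrt, fun _ hσ _ _ => Pc.mix hσ _ _⟩

theorem Pc_mono {A B : Set R} (h : A ⊆ B) {x : R} (hx : Pc Sg A x) : Pc Sg B x :=
  Pc_min Sg (Pc_isPerf Sg B) (fun a ha => Pc.base (h ha)) hx

/-- Multiplicativity: `{A}·{B} ⊆ {A·B}`. -/
theorem Pc_mul {A B : Set R} {x y : R} (hx : Pc Sg A x) (hy : Pc Sg B y) :
    Pc Sg (Set.image2 (· * ·) A B) (x * y) := by
  set J : Set R := {z | Pc Sg (Set.image2 (· * ·) A B) z} with hJ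
  -- Step 1: for a fixed `a`, the set `D a = {y | a*y ∈ J}` is perfect.
  have hD : ∀ a : R, IsPerf Sg {y | a * y ∈ J} := by
    intro a
    refine ⟨?_, ?_, ?_, ?_, ?_, ?_, ?_⟩
    · simpa [hJ] using (Pc.smul a (Pc.zero : Pc Sg _ 0))
    · intro u v hu hv; simpa [hJ, mul_add] using Pc.add hu hv
    · intro r u hu
      have := Pc.smul r hu
      simpa [hJ, mul_left_comm] using this
    · intro σ hσ u hu; exact Pc.mix hσ a u hu
    · intro σ hσ u hu
      -- a * σ u ∈ J  ⇒  a * u ∈ J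
      have h1 : Pc Sg (Set.image2 (· * ·) A B) (σ u * a) := by
        simpa [hJ, mul_comm] using hu
      have h2 := Pc.mix hσ (σ u) a h1
      have h3 : Pc Sg (Set.image2 (· * ·) A B) (σ (u * a)) := by
        simpa [map_mul] using h2
      have h4 := Pc.unsigma hσ h3
      simpa [hJ, mul_comm] using h4
    · intro u hu
      -- a * (u*u) ∈ J ⇒ a*u ∈ J
      have h1 : Pc Sg (Set.image2 (· * ·) A B) ((a * u) * (a * u)) := by
        have := Pc.smul a hu
        simpa [mul_assoc, mul_left_comm, mul_comm] using this
      exact Pc.sqrt h1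
    · intro σ hσ u v hu
      have h1 : Pc Sg (Set.image2 (· * ·) A B) ((a * u) * v) := by
        simpa [hJ, mul_assoc] using hu
      have h2 := Pc.mix hσ (a * u) v h1
      simpa [hJ, mul_assoc] using h2
  -- Step 2: the set `C = {x | ∀ y ∈ Pc B, x*y ∈ J}` is perfect and contains A.
  have hC : IsPerf Sg {x | ∀ y : R, Pc Sg B y → x * y ∈ J} := by
    refine ⟨?_, ?_, ?_, ?_, ?_, ?_, ?_⟩
    · intro y _; simpa [hJ] using (Pc.smul y (Pc.zero : Pc Sg _ 0))
    · intro u v hu hv y hy; simpa [hJ, add_mul] using Pc.add (hu y hy) (hv y hy)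
    · intro r u hu y hy
      have := Pc.smul r (hu y hy)
      simpa [hJ, mul_assoc] using this
    · intro σ hσ u hu y hy
      have h1 : Pc Sg (Set.image2 (· * ·) A B) (y * u) := by
        simpa [hJ, mul_comm] using hu y hy
      have h2 := Pc.mix hσ y u h1
      simpa [hJ, mul_comm] using h2
    · intro σ hσ u hu y hy
      have h1 := hu (σ y) (Pc.sigma hσ hy)
      have h2 : Pc Sg (Set.image2 (· * ·) A B) (σ (u * y)) := by
        simpa [hJ, map_mul] using h1
      exact Pc.unsigma hσ h2
    · intro u hu y hy
      have h1 := hu (y * y) (Pc.smul y hy)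
      have h2 : Pc Sg (Set.image2 (· * ·) A B) ((u * y) * (u * y)) := by
        simpa [hJ, mul_assoc, mul_left_comm, mul_comm] using h1
      exact Pc.sqrt h2
    · intro σ hσ u v hu y hy
      have h1 : Pc Sg (Set.image2 (· * ·) A B) ((u * y) * v) := by
        simpa [hJ, mul_assoc, mul_comm, mul_left_comm] using hu y hy
      have h2 := Pc.mix hσ (u * y) v h1
      simpa [hJ, mul_assoc, mul_comm, mul_left_comm] using h2
  have hAC : A ⊆ {x | ∀ y : R, Pc Sg B y → x * y ∈ J} := by
    intro a ha y hy
    exact Pc_min Sg (hD a) (fun b hb => Pc.base (Set.mem_image2_of_mem ha hb)) hy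
  exact Pc_min Sg hC hAC hx y hy

/-- Existence of a Σ-prime: if `f ∉ Pc A`, there is a prime ideal `p ⊇ A`,
stable under every `σ ∈ Sg`, with `f ∉ p`. -/
theorem exists_sigma_prime {A : Set R} {f : R} (hf : ¬ Pc Sg A f) :
    ∃ p : Ideal R, p.IsPrime ∧ (∀ σ ∈ Sg, ∀ a : R, σ a ∈ p ↔ a ∈ p) ∧
      A ⊆ (p : Set R) ∧ f ∉ p := by
  set 𝒮 : Set (Set R) := {S | IsPerf Sg S ∧ A ⊆ S ∧ f ∉ S} with h𝒮
  have hPA : {x | Pc Sg A x} ∈ 𝒮 :=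
    ⟨Pc_isPerf Sg A, fun a ha => Pc.base ha, hf⟩
  have hzorn : ∀ c ⊆ 𝒮, IsChain (· ⊆ ·) c → c.Nonempty →
      ∃ ub ∈ 𝒮, ∀ s ∈ c, s ⊆ ub := by
    intro c hc hchain hcne
    refine ⟨⋃₀ c, ⟨?_, ?_, ?_⟩, fun s hs => Set.subset_sUnion_of_mem hs⟩
    · constructor
      · obtain ⟨s, hs⟩ := hcne
        exact Set.mem_sUnion.2 ⟨s, hs, (hc hs).1.1⟩
      refine ⟨?_, ?_, ?_, ?_, ?_, ?_⟩
      · rintro a b ⟨s, hs, has⟩ ⟨t, ht, hbt⟩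
        rcases hchain.total hs ht with h | h
        · exact ⟨t, ht, (hc ht).1.2.1 a b (h has) hbt⟩
        · exact ⟨s, hs, (hc hs).1.2.1 a b has (h hbt)⟩
      · rintro r a ⟨s, hs, has⟩; exact ⟨s, hs, (hc hs).1.2.2.1 r a has⟩
      · rintro σ hσ a ⟨s, hs, has⟩; exact ⟨s, hs, (hc hs).1.2.2.2.1 σ hσ a has⟩
      · rintro σ hσ a ⟨s, hs, has⟩; exact ⟨s, hs, (hc hs).1.2.2.2.2.1 σ hσ a has⟩
      · rintro a ⟨s, hs, has⟩; exact ⟨s, hs, (hc hs).1.2.2.2.2.2.1 a has⟩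
      · rintro σ hσ a b ⟨s, hs, has⟩; exact ⟨s, hs, (hc hs).1.2.2.2.2.2.2 σ hσ a b has⟩
    · obtain ⟨s, hs⟩ := hcne
      exact (hc hs).2.1.trans (Set.subset_sUnion_of_mem hs)
    · rintro ⟨s, hs, hfs⟩; exact (hc hs).2.2 hfs
  obtain ⟨M, -, hM⟩ := zorn_subset_nonempty 𝒮 hzorn _ hPA
  obtain ⟨⟨hperf, hAM, hfM⟩, hmax⟩ := hM
  obtain ⟨h0, hadd, hsmul, hs, hus, hsq, hmix⟩ := hperf
  -- M is an ideal
  set p : Ideal R :=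
    { carrier := M
      zero_mem' := h0
      add_mem' := fun ha hb => hadd _ _ ha hb
      smul_mem' := fun r a ha => hsmul r a ha } with hp
  have hmem : ∀ x : R, x ∈ p ↔ x ∈ M := fun _ => Iff.rfl
  -- maximality: adjoining any element not in M forces f into the closure
  have hadj : ∀ a : R, a ∉ M → Pc Sg (M ∪ {a}) f := by
    intro a haM
    by_contra hfa
    have hmem' : {x | Pc Sg (M ∪ {a}) x} ∈ 𝒮 :=
      ⟨Pc_isPerf Sg _, fun x hx => Pc.base (Or.inl (hAM hx)), hfa⟩
    have hsub : M ⊆ {x | Pc Sg (M ∪ {a}) x} := fun x hx => Pc.base (Or.inl hx)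
    have := hmax hmem' hsub
    exact haM (this (Pc.base (Or.inr rfl)))
  have hMperf : IsPerf Sg M := ⟨h0, hadd, hsmul, hs, hus, hsq, hmix⟩
  have hprime : p.IsPrime := by
    constructor
    · intro h1
      exact hfM (hsmul f 1 ((Ideal.eq_top_iff_one p).1 h1) |> fun h => by
        simpa using h)
    · intro a b hab
      by_contra hcon
      push_neg at hcon
      obtain ⟨haM, hbM⟩ := hcon
      have hfa := hadj a haM
      have hfb := hadj b hbM
      have hff := Pc_mul Sg hfa hfb
      have hsub : Set.image2 (· * ·) (M ∪ {a}) (M ∪ {b}) ⊆ M := by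
        rintro z ⟨u, hu, v, hv, rfl⟩
        rcases hu with hu | hu
        · exact (by simpa [mul_comm] using hsmul v u hu)
        · rcases hv with hv | hv
          · exact hsmul u v hv
          · simp only [Set.mem_singleton_iff] at hu hv
            rw [hu, hv]; exact hab
      have : f * f ∈ M := Pc_min Sg hMperf hsub hff
      exact hfM (hsq f this)
  exact ⟨p, hprime, fun σ hσ a => ⟨fun h => hus σ hσ a h, fun h => hs σ hσ a h⟩,
    hAM, hfM⟩

/-- Finiteness: a derivation of `f ∈ Pc (range g)` only uses finitely many `g i`. -/
theorem Pc_finite {ι : Type*} {g : ι → R} {f : R} (hf : Pc Sg (Set.range g) f) :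
    ∃ s : Finset ι, Pc Sg {x | ∃ i ∈ s, g i = x} f := by
  classical
  induction hf with
  | @base a h =>
      obtain ⟨i, rfl⟩ := h
      exact ⟨{i}, Pc.base ⟨i, by simp, rfl⟩⟩
  | zero => exact ⟨∅, Pc.zero⟩
  | add _ _ iha ihb =>
      obtain ⟨s, hs⟩ := iha; obtain ⟨t, ht⟩ := ihb
      refine ⟨s ∪ t, Pc.add (Pc_mono Sg ?_ hs) (Pc_mono Sg ?_ ht)⟩
      · rintro x ⟨i, hi, rfl⟩; exact ⟨i, Finset.mem_union_left _ hi, rfl⟩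
      · rintro x ⟨i, hi, rfl⟩; exact ⟨i, Finset.mem_union_right _ hi, rfl⟩
  | smul r _ ih => obtain ⟨s, hs⟩ := ih; exact ⟨s, Pc.smul r hs⟩
  | sigma hσ _ ih => obtain ⟨s, hs⟩ := ih; exact ⟨s, Pc.sigma hσ hs⟩
  | unsigma hσ _ ih => obtain ⟨s, hs⟩ := ih; exact ⟨s, Pc.unsigma hσ hs⟩
  | sqrt _ ih => obtain ⟨s, hs⟩ := ih; exact ⟨s, Pc.sqrt hs⟩
  | mix hσ a b _ ih => obtain ⟨s, hs⟩ := ih; exact ⟨s, Pc.mix hσ a b hs⟩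

end DfQC

/-- `D^{(Σ)}(f)` is quasi-compact: any cover of it by basic open sets
`D^{(Σ)}(gᵢ)` admits a finite subcover.  Points of `Spec^{(Σ)}(R)` are primes fixed
by every `σ ∈ Σ`. -/
theorem D_f_quasiCompact
    {R : Type*} [CommRing R] (Sg : Set (R →+* R))
    (hinj : ∀ σ ∈ Sg, Function.Injective σ)
    (hconj : ∀ σ ∈ Sg, ∀ τ ∈ Sg, ∃ ρ ∈ Sg, (τ : R →+* R).comp ρ = σ.comp τ)
    (f : R) {ι : Type*} (g : ι → R)
    (hcov : ∀ p : Ideal R, p.IsPrime → (∀ σ ∈ Sg, ∀ a : R, σ a ∈ p ↔ a ∈ p) →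
      f ∉ p → ∃ i : ι, g i ∉ p) :
    ∃ s : Finset ι, ∀ p : Ideal R, p.IsPrime →
      (∀ σ ∈ Sg, ∀ a : R, σ a ∈ p ↔ a ∈ p) → f ∉ p → ∃ i ∈ s, g i ∉ p := by
  open DfQC in
  have hfPc : Pc Sg (Set.range g) f := by
    by_contra hf
    obtain ⟨p, hp, hst, hAp, hfp⟩ := exists_sigma_prime Sg hf
    obtain ⟨i, hi⟩ := hcov p hp hst hfp
    exact hi (hAp ⟨i, rfl⟩)
  obtain ⟨s, hs⟩ := Pc_finite Sg hfPc
  refine ⟨s, fun p hp hst hfp => ?_⟩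
  by_contra hcon
  push_neg at hcon
  have hperf : IsPerf Sg (p : Set R) := by
    refine ⟨p.zero_mem, fun a b ha hb => p.add_mem ha hb,
      fun r a ha => p.mul_mem_left r ha,
      fun σ hσ a ha => (hst σ hσ a).2 ha,
      fun σ hσ a ha => (hst σ hσ a).1 ha,
      fun a ha => ?_, fun σ hσ a b hab => ?_⟩
    · rcases hp.mul_mem_iff_mem_or_mem.1 ha with h | h <;> exact h
    · rcases hp.mul_mem_iff_mem_or_mem.1 hab with h | h
      · exact p.mul_mem_right _ h
      · exact p.mul_mem_left _ ((hst σ hσ b).2 h)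
  have : f ∈ (p : Set R) :=
    Pc_min Sg hperf (by rintro x ⟨i, hi, rfl⟩; exact hcon i hi) hs
  exact hfp this
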